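/- arXiv:2310.13045 — 3 statements merged into one kernel-verified Lean document; each statement's English description precedes it below -/
import Mathlib

section
/- If a unit vector ψ in a finite-dimensional complex inner product space has d = dim H rotated copies e^{-iθ_k J} ψ (for a self-adjoint operator J with integer-spaced spectrum and some real angles θ_1,...,θ_d) that are pairwise orthogonal, then |⟨e_m, ψ⟩|² = 1/d for every eigenvector e_m of J in an orthonormal eigenbasis; i.e., ψ must be an equal-magnitude superposition of all eigenvectors of J. -/
open Complex Real BigOperators

open Matrix

/-- If a unit vector `ψ` (expressed in an orthonormal eigenbasis of a self-adjoint operator `J`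
with integer eigenvalues `μ m`) has `d` rotated copies `e^{-iθ_k J} ψ` that are pairwise
orthogonal, then `|⟨e_m, ψ⟩|² = 1/d` for every `m`: `ψ` is an equal-magnitude superposition
of all eigenvectors of `J`. -/
theorem optimal_protractor_is_uniform (d : ℕ) (hd : 0 < d)
    (μ : Fin d → ℤ) (hμ : Function.Injective μ)
    (ψ : Fin d → ℂ) (hψ : ∑ m, ‖ψ m‖ ^ 2 = 1)
    (θ : Fin d → ℝ)
    (horth : ∀ k l : Fin d, k ≠ l →
      ∑ m, star (Complex.exp (-Complex.I * (θ k) * (μ m)) * ψ m) *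
        (Complex.exp (-Complex.I * (θ l) * (μ m)) * ψ m) = 0) :
    ∀ m, ‖ψ m‖ ^ 2 = 1 / d := by
  set A : Matrix (Fin d) (Fin d) ℂ :=
    fun k n => Complex.exp (-Complex.I * (θ k) * (μ n)) * ψ n with hA
  have hsq : ∀ k n, star (A k n) * A k n = ((‖ψ n‖ ^ 2 : ℝ) : ℂ) := by
    intro k n
    have habs : ‖Complex.exp (-Complex.I * (θ k) * (μ n))‖ = 1 := by
      rw [Complex.norm_exp]
      have : (-Complex.I * (θ k) * (μ n)).re = 0 := by simp
      rw [this, Real.exp_zero]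
    have h1 : star (A k n) * A k n = ((Complex.normSq (A k n) : ℝ) : ℂ) := by
      rw [Complex.star_def, Complex.normSq_eq_conj_mul_self]
    rw [h1]
    congr 1
    have h2 : Complex.normSq (A k n) = Complex.normSq (ψ n) := by
      show Complex.normSq (Complex.exp (-Complex.I * (θ k) * (μ n)) * ψ n) = _
      rw [Complex.normSq_mul, Complex.normSq_eq_norm_sq, habs]
      ring
    rw [h2, ← Complex.sq_norm]
  have h1 : A * Aᴴ = 1 := by
    ext k l
    rw [Matrix.mul_apply]
    by_cases hkl : k = l
    · subst hkl
      simp only [Matrix.conjTranspose_apply, Matrix.one_apply_eq]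
      have : ∀ m, A k m * star (A k m) = ((‖ψ m‖ ^ 2 : ℝ) : ℂ) := by
        intro m; rw [mul_comm]; exact hsq k m
      rw [Finset.sum_congr rfl (fun m _ => this m), ← Complex.ofReal_sum, hψ]
      norm_num
    · have h0 := horth k l hkl
      have hterm : ∀ m, A k m * (Aᴴ) m l = star (star (A k m) * A l m) := by
        intro m
        simp [Matrix.conjTranspose_apply, mul_comm]
      rw [Finset.sum_congr rfl (fun m _ => hterm m), ← star_sum]
      have h0' : ∑ m, star (A k m) * A l m = 0 := h0
      rw [h0']
      simp [Matrix.one_apply_ne hkl]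
  have h2 : Aᴴ * A = 1 := mul_eq_one_comm.mp h1
  intro m
  have h3 : (Aᴴ * A) m m = 1 := by rw [h2]; simp
  rw [Matrix.mul_apply] at h3
  have h4 : ∀ k, (Aᴴ) m k * A k m = ((‖ψ m‖ ^ 2 : ℝ) : ℂ) := fun k => by
    rw [Matrix.conjTranspose_apply]; exact hsq k m
  rw [Finset.sum_congr rfl (fun k _ => h4 k), Finset.sum_const, Finset.card_univ,
    Fintype.card_fin, nsmul_eq_mul] at h3
  have h5 : (d : ℝ) * (‖ψ m‖ ^ 2) = 1 := by exact_mod_cast h3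
  have hd' : (d : ℝ) ≠ 0 := Nat.cast_ne_zero.mpr hd.ne'
  rw [eq_div_iff hd']
  linarith
end

section
/- There is no unit vector ψ ∈ ℂ² that is simultaneously unbiased with respect to the eigenbases of all three Pauli matrices σ_x, σ_y, σ_z; i.e., there is no ψ with |⟨v, ψ⟩|² = 1/2 for every eigenvector v of each of σ_x, σ_y, σ_z. -/
open Complex Real BigOperators Matrix

noncomputable section

def pauliX : Matrix (Fin 2) (Fin 2) ℂ := !![0, 1; 1, 0]
def pauliY : Matrix (Fin 2) (Fin 2) ℂ := !![0, -Complex.I; Complex.I, 0]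
def pauliZ : Matrix (Fin 2) (Fin 2) ℂ := !![1, 0; 0, -1]

/-- There is no unit vector `ψ ∈ ℂ²` that is simultaneously unbiased with respect to the
eigenbases of all three Pauli matrices, i.e. with `|⟨v, ψ⟩|² = 1/2` for every unit
eigenvector `v` of each of `σ_x, σ_y, σ_z`. -/
theorem no_perfect_protractor_spin_half :
    ¬ ∃ ψ : Fin 2 → ℂ, (∑ i, ‖ψ i‖ ^ 2 = 1) ∧
      ∀ A ∈ ({pauliX, pauliY, pauliZ} : Set (Matrix (Fin 2) (Fin 2) ℂ)),
        ∀ (t : ℂ) (v : Fin 2 → ℂ), A.mulVec v = t • v → (∑ i, ‖v i‖ ^ 2 = 1) →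
          ‖∑ i, star (v i) * ψ i‖ ^ 2 = 1 / 2 := by
  rintro ⟨ψ, hnorm, h⟩
  set s : ℂ := ((Real.sqrt 2 : ℝ) : ℂ)⁻¹ with hs
  have hsum : ∀ v : Fin 2 → ℂ, (∑ i, ‖v i‖ ^ 2) = ‖v 0‖^2 + ‖v 1‖^2 := by
    intro v; simp [Fin.sum_univ_two]
  have hs2 : ‖s‖^2 = 1/2 := by
    rw [hs, norm_inv, Complex.norm_real, Real.norm_eq_abs,
      _root_.abs_of_nonneg (Real.sqrt_nonneg 2), inv_pow,
      Real.sq_sqrt (by norm_num : (0:ℝ) ≤ 2)]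
    norm_num
  have hz := h pauliZ (by simp) 1 ![1, 0] (by
      funext i; fin_cases i <;> simp [pauliZ, Matrix.mulVec, dotProduct, Fin.sum_univ_two])
    (by simp [Fin.sum_univ_two])
  have hx := h pauliX (by simp) 1 ![s, s] (by
      funext i; fin_cases i <;> simp [pauliX, Matrix.mulVec, dotProduct, Fin.sum_univ_two])
    (by rw [hsum]
        simp only [Matrix.cons_val_zero, Matrix.cons_val_one, Matrix.head_cons]
        rw [hs2]; norm_num)
  have hy := h pauliY (by simp) 1 ![s, Complex.I * s] (by
      funext i; fin_cases i <;>
        simp [pauliY, Matrix.mulVec, dotProduct, Fin.sum_univ_two] <;> simp [← mul_assoc, Complex.I_mul_I, Complex.I_sq])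
    (by rw [hsum]
        simp only [Matrix.cons_val_zero, Matrix.cons_val_one, Matrix.head_cons,
          norm_mul, Complex.norm_I, one_mul]
        rw [hs2]; norm_num)
  have hss : (starRingEnd ℂ) (((Real.sqrt 2 : ℝ) : ℂ))⁻¹ = ((Real.sqrt 2 : ℝ) : ℂ)⁻¹ := by
    simp [Complex.conj_ofReal]
  have hz' : ‖ψ 0‖^2 = 1/2 := by
    have e : (∑ i, star (![(1:ℂ), 0] i) * ψ i) = ψ 0 := by simp [Fin.sum_univ_two]
    rwa [e] at hz
  have hn1 : ‖ψ 1‖^2 = 1/2 := by rw [hsum] at hnorm; linarith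
  have hx' : ‖ψ 0 + ψ 1‖^2 = 1 := by
    have e : (∑ i, star (![s, s] i) * ψ i) = s * (ψ 0 + ψ 1) := by
      simp only [Fin.sum_univ_two, Matrix.cons_val_zero, Matrix.cons_val_one, Matrix.head_cons, hs, Complex.star_def, map_inv₀, hss]
      ring
    rw [e, norm_mul, mul_pow, hs2] at hx
    linarith
  have hy' : ‖ψ 0 - Complex.I * ψ 1‖^2 = 1 := by
    have e : (∑ i, star (![s, Complex.I * s] i) * ψ i) = s * (ψ 0 - Complex.I * ψ 1) := by
      simp only [Fin.sum_univ_two, Matrix.cons_val_zero, Matrix.cons_val_one, Matrix.head_cons, hs, Complex.star_def, _root_.map_mul, map_inv₀, hss, Complex.conj_I]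
      ring
    rw [e, norm_mul, mul_pow, hs2] at hy
    linarith
  set a := ψ 0 with ha
  set b := ψ 1 with hb
  have nsq : ∀ z : ℂ, ‖z‖^2 = z.re^2 + z.im^2 := by
    intro z
    rw [Complex.sq_norm, Complex.normSq_apply]; ring
  rw [nsq] at hz' hn1 hx' hy'
  simp only [Complex.add_re, Complex.add_im, Complex.sub_re, Complex.sub_im,
    Complex.mul_re, Complex.mul_im, Complex.I_re, Complex.I_im] at hx' hy'
  have hp : a.re*b.re + a.im*b.im = 0 := by nlinarith [hx', hz', hn1]
  have hq : a.re*b.im - a.im*b.re = 0 := by nlinarith [hy', hz', hn1]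
  have key : (a.re^2+a.im^2)*(b.re^2+b.im^2)
      = (a.re*b.re+a.im*b.im)^2 + (a.re*b.im-a.im*b.re)^2 := by ring
  rw [hz', hn1, hp, hq] at key
  norm_num at key

end
end

section
/- The spin-1 state ψ = (1/√3)(e^{3πi/4}|1⟩ + |0⟩ + e^{iπ/4}|−1⟩) (written in the J_z eigenbasis) satisfies |⟨v, ψ⟩|² = 1/3 for every eigenvector v of each of the spin-1 angular momentum operators J_x, J_y, J_z; i.e., ψ is a perfect quantum protractor for spin 1. -/
open Complex Real BigOperators Matrix

noncomputable section

def J1x : Matrix (Fin 3) (Fin 3) ℂ :=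
  (1 / (Real.sqrt 2 : ℂ)) • !![0, 1, 0; 1, 0, 1; 0, 1, 0]
def J1y : Matrix (Fin 3) (Fin 3) ℂ :=
  (Complex.I / (Real.sqrt 2 : ℂ)) • !![0, -1, 0; 1, 0, -1; 0, 1, 0]
def J1z : Matrix (Fin 3) (Fin 3) ℂ := !![1, 0, 0; 0, 0, 0; 0, 0, -1]

lemma e1A : Complex.exp (Complex.I * (3 * (Real.pi:ℂ) / 4)) =
    (↑(-(Real.sqrt 2/2)) : ℂ) + ↑(Real.sqrt 2/2) * Complex.I := by
  have h : (Complex.I * (3 * (Real.pi:ℂ) / 4)) = ((3*Real.pi/4 : ℝ) : ℂ) * Complex.I := by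
    push_cast; ring
  rw [h, Complex.exp_mul_I, ← Complex.ofReal_cos, ← Complex.ofReal_sin]
  have hc : Real.cos (3*Real.pi/4) = -(Real.sqrt 2/2) := by
    have h34 : (3*Real.pi/4 : ℝ) = Real.pi - Real.pi/4 := by ring
    rw [h34, Real.cos_pi_sub, Real.cos_pi_div_four]
  have hs : Real.sin (3*Real.pi/4) = Real.sqrt 2/2 := by
    have h34 : (3*Real.pi/4 : ℝ) = Real.pi - Real.pi/4 := by ring
    rw [h34, Real.sin_pi_sub, Real.sin_pi_div_four]
  rw [hc, hs]

lemma e2A : Complex.exp (Complex.I * ((Real.pi:ℂ) / 4)) =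
    (↑(Real.sqrt 2/2) : ℂ) + ↑(Real.sqrt 2/2) * Complex.I := by
  have h : (Complex.I * ((Real.pi:ℂ) / 4)) = ((Real.pi/4 : ℝ) : ℂ) * Complex.I := by
    push_cast; ring
  rw [h, Complex.exp_mul_I, ← Complex.ofReal_cos, ← Complex.ofReal_sin,
    Real.cos_pi_div_four, Real.sin_pi_div_four]

lemma habs2 : ‖((Real.sqrt 2 : ℝ) : ℂ)‖^2 = 2 := by
  rw [Complex.norm_real, Real.norm_eq_abs, _root_.sq_abs]
  exact Real.sq_sqrt (by norm_num)

lemma key_norm (w : ℂ) (a b r : ℝ) (hw : ‖w‖^2 = r) (h : r * (a^2+b^2) = 1/3) :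
    ‖star w * ((a:ℂ) + (b:ℂ) * Complex.I)‖^2 = 1/3 := by
  rw [norm_mul, mul_pow, norm_star, hw, Complex.sq_norm,
    Complex.normSq_add_mul_I, h]

lemma s2sq : ((Real.sqrt 2:ℝ):ℂ) * ((Real.sqrt 2:ℝ):ℂ) = 2 := by
  rw [← Complex.ofReal_mul]
  norm_num [Real.mul_self_sqrt]

/-- The spin-1 state `ψ = (1/√3)(e^{3πi/4}|1⟩ + |0⟩ + e^{iπ/4}|−1⟩)` satisfies
`|⟨v, ψ⟩|² = 1/3` for every unit eigenvector `v` of each of `J_x, J_y, J_z`: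
it is a perfect quantum protractor for spin 1. -/
theorem perfect_protractor_spin_one :
    ∀ A ∈ ({J1x, J1y, J1z} : Set (Matrix (Fin 3) (Fin 3) ℂ)),
      ∀ (t : ℂ) (v : Fin 3 → ℂ), A.mulVec v = t • v → (∑ i, ‖v i‖ ^ 2 = 1) →
        ‖∑ i, star (v i) *
          ((1 / (Real.sqrt 3 : ℂ)) *
            ![Complex.exp (Complex.I * (3 * Real.pi / 4)), 1,
              Complex.exp (Complex.I * (Real.pi / 4))] i)‖ ^ 2 = 1 / 3 := by
  intro A hA t v hv hn
  simp only [Set.mem_insert_iff, Set.mem_singleton_iff] at hA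
  rcases hA with rfl | rfl | rfl
  · have hs2 : ((Real.sqrt 2 : ℝ) : ℂ) ≠ 0 := Complex.ofReal_ne_zero.mpr (by positivity)
    have hs3 : (Real.sqrt 3 : ℝ) ≠ 0 := by positivity
    have hsq2 : (Real.sqrt 2:ℝ)^2 = 2 := Real.sq_sqrt (by norm_num)
    have hsq3 : (Real.sqrt 3:ℝ)^2 = 3 := Real.sq_sqrt (by norm_num)
    have h0 := congrFun hv 0
    have h1 := congrFun hv 1
    have h2 := congrFun hv 2
    simp only [J1x, Matrix.mulVec, dotProduct, Fin.sum_univ_three] at h0 h1 h2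
    norm_num [Matrix.cons_val_two, Matrix.tail_cons, Matrix.head_cons, Matrix.cons_val_one, Matrix.cons_val_zero] at h0 h1 h2
    field_simp at h0 h1 h2
    simp only [Fin.sum_univ_three] at hn
    rw [Fin.sum_univ_three]
    by_cases ht : t = 0
    · subst ht
      simp only [zero_mul, mul_zero] at h0 h1 h2
      have hv1 : v 1 = 0 := h0
      have hv2 : v 2 = -v 0 := by linear_combination h1
      rw [hv1, hv2] at hn
      simp only [norm_mul, mul_pow, norm_neg, norm_zero] at hn
      have hr : ‖v 0‖^2 = 1/2 := by nlinarith
      have key := key_norm (v 0) (-(Real.sqrt 2/Real.sqrt 3)) 0 (1/2) hr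
        (by norm_num [div_pow, hsq2, hsq3])
      convert key using 3
      simp only [hv1, hv2, e1A, e2A, Matrix.cons_val_zero, Matrix.cons_val_one,
        Matrix.head_cons, Matrix.cons_val_two, Matrix.tail_cons, star_zero, star_neg]
      push_cast
      ring
    · have hv02 : v 0 = v 2 := mul_left_cancel₀ (mul_ne_zero hs2 ht) (h0.symm.trans h2)
      have hfact : (t^2 - 1) * v 0 = 0 := by
        linear_combination (-(1:ℂ)/2) * h1 + (-(t*((Real.sqrt 2:ℝ):ℂ))/2) * h0 +
          (-(1:ℂ)/2) * hv02 + (-(t^2 * v 0)/2) * s2sq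
      rcases mul_eq_zero.mp hfact with hfac | hzero
      · have h' : (t-1)*(t+1) = 0 := by linear_combination hfac
        rcases mul_eq_zero.mp h' with h'' | h''
        · have ht1 : t = 1 := by linear_combination h''
          subst ht1
          have hv1 : v 1 = ((Real.sqrt 2:ℝ):ℂ) * v 0 := by linear_combination h0
          have hv2 : v 2 = v 0 := hv02.symm
          rw [hv1, hv2] at hn
          simp only [norm_mul, mul_pow, habs2] at hn
          have hr : ‖v 0‖^2 = 1/4 := by nlinarith
          have key := key_norm (v 0) (Real.sqrt 2/Real.sqrt 3) (Real.sqrt 2/Real.sqrt 3)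
            (1/4) hr (by norm_num [div_pow, hsq2, hsq3])
          convert key using 3
          simp only [hv1, hv2, e1A, e2A, Matrix.cons_val_zero, Matrix.cons_val_one,
            Matrix.head_cons, Matrix.cons_val_two, Matrix.tail_cons, star_mul',
            Complex.star_def, Complex.conj_ofReal]
          push_cast
          ring
        · have ht1 : t = -1 := by linear_combination h''
          subst ht1
          have hv1 : v 1 = -(((Real.sqrt 2:ℝ):ℂ) * v 0) := by linear_combination h0
          have hv2 : v 2 = v 0 := hv02.symm
          rw [hv1, hv2] at hn
          simp only [norm_mul, mul_pow, norm_neg, habs2] at hn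
          have hr : ‖v 0‖^2 = 1/4 := by nlinarith
          have key := key_norm (v 0) (-(Real.sqrt 2/Real.sqrt 3)) (Real.sqrt 2/Real.sqrt 3)
            (1/4) hr (by norm_num [div_pow, hsq2, hsq3])
          convert key using 3
          simp only [hv1, hv2, e1A, e2A, Matrix.cons_val_zero, Matrix.cons_val_one,
            Matrix.head_cons, Matrix.cons_val_two, Matrix.tail_cons, star_mul', star_neg,
            Complex.star_def, Complex.conj_ofReal]
          push_cast
          ring
      · have hv1 : v 1 = 0 := by rw [hzero] at h0; simpa using h0
        have hv2 : v 2 = 0 := hv02 ▸ hzero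
        rw [hzero, hv1, hv2] at hn
        norm_num at hn

  · have hs2 : ((Real.sqrt 2 : ℝ) : ℂ) ≠ 0 := Complex.ofReal_ne_zero.mpr (by positivity)
    have hsq2 : (Real.sqrt 2:ℝ)^2 = 2 := Real.sq_sqrt (by norm_num)
    have hsq3 : (Real.sqrt 3:ℝ)^2 = 3 := Real.sq_sqrt (by norm_num)
    have hI2 : Complex.I * Complex.I = -1 := Complex.I_mul_I
    have h0 := congrFun hv 0
    have h1 := congrFun hv 1
    have h2 := congrFun hv 2
    simp only [J1y, Matrix.mulVec, dotProduct, Fin.sum_univ_three] at h0 h1 h2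
    norm_num [Matrix.cons_val_two, Matrix.tail_cons, Matrix.head_cons, Matrix.cons_val_one, Matrix.cons_val_zero] at h0 h1 h2
    field_simp at h0 h1 h2
    simp only [Fin.sum_univ_three] at hn
    rw [Fin.sum_univ_three]
    by_cases ht : t = 0
    · subst ht
      simp only [zero_mul, mul_zero] at h0 h1 h2
      have hv1 : v 1 = 0 := by
        have h : Complex.I * v 1 = 0 := by linear_combination -h0
        exact (mul_eq_zero.mp h).resolve_left Complex.I_ne_zero
      have hv2 : v 2 = v 0 := by
        have h : Complex.I * (v 0 - v 2) = 0 := by linear_combination h1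
        have h' := (mul_eq_zero.mp h).resolve_left Complex.I_ne_zero
        linear_combination -h'
      rw [hv1, hv2] at hn
      simp only [norm_zero] at hn
      have hr : ‖v 0‖^2 = 1/2 := by nlinarith
      have key := key_norm (v 0) 0 (Real.sqrt 2/Real.sqrt 3) (1/2) hr
        (by norm_num [div_pow, hsq2, hsq3])
      convert key using 3
      simp only [hv1, hv2, e1A, e2A, Matrix.cons_val_zero, Matrix.cons_val_one,
        Matrix.head_cons, Matrix.cons_val_two, Matrix.tail_cons, star_zero]
      push_cast
      ring
    · have hh : t * ((v 0 + v 2) * ((Real.sqrt 2:ℝ):ℂ)) = 0 := by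
        linear_combination -h0 - h2
      have h' := (mul_eq_zero.mp hh).resolve_left ht
      have h'' := (mul_eq_zero.mp h').resolve_right hs2
      have hv02 : v 2 = -v 0 := by linear_combination h''
      have hv1 : v 1 = Complex.I * (t * (((Real.sqrt 2:ℝ):ℂ) * v 0)) := by
        linear_combination Complex.I * h0 + (v 1) * hI2
      rw [hv02, hv1] at h1
      have hfact : (t^2 - 1) * v 0 = 0 := by
        linear_combination (Complex.I/2) * h1 + (Complex.I*Complex.I*t^2*(v 0)/2) * s2sq +
          (t^2*(v 0) - v 0) * hI2
      rcases mul_eq_zero.mp hfact with hfac | hzero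
      · have hf : (t-1)*(t+1) = 0 := by linear_combination hfac
        rcases mul_eq_zero.mp hf with h'' | h''
        · have ht1 : t = 1 := by linear_combination h''
          subst ht1
          have hv1' : v 1 = Complex.I * (((Real.sqrt 2:ℝ):ℂ) * v 0) := by rw [hv1]; ring
          rw [hv1', hv02] at hn
          simp only [norm_mul, mul_pow, Complex.norm_I, one_pow, one_mul, habs2,
            norm_neg] at hn
          have hr : ‖v 0‖^2 = 1/4 := by nlinarith
          have key := key_norm (v 0) (-(Real.sqrt 2/Real.sqrt 3)) (-(Real.sqrt 2/Real.sqrt 3))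
            (1/4) hr (by norm_num [div_pow, hsq2, hsq3])
          convert key using 3
          simp only [hv1', hv02, e1A, e2A, Matrix.cons_val_zero, Matrix.cons_val_one,
            Matrix.head_cons, Matrix.cons_val_two, Matrix.tail_cons, star_mul', star_neg,
            Complex.star_def, Complex.conj_ofReal, Complex.conj_I]
          push_cast
          ring
        · have ht1 : t = -1 := by linear_combination h''
          subst ht1
          have hv1' : v 1 = -(Complex.I * (((Real.sqrt 2:ℝ):ℂ) * v 0)) := by rw [hv1]; ring
          rw [hv1', hv02] at hn
          simp only [norm_mul, mul_pow, Complex.norm_I, one_pow, one_mul, habs2,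
            norm_neg] at hn
          have hr : ‖v 0‖^2 = 1/4 := by nlinarith
          have key := key_norm (v 0) (-(Real.sqrt 2/Real.sqrt 3)) (Real.sqrt 2/Real.sqrt 3)
            (1/4) hr (by norm_num [div_pow, hsq2, hsq3])
          convert key using 3
          simp only [hv1', hv02, e1A, e2A, Matrix.cons_val_zero, Matrix.cons_val_one,
            Matrix.head_cons, Matrix.cons_val_two, Matrix.tail_cons, star_mul', star_neg,
            Complex.star_def, Complex.conj_ofReal, Complex.conj_I]
          push_cast
          ring
      · rw [hzero] at hv02 hv1
        simp only [mul_zero, neg_zero] at hv02 hv1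
        rw [hzero, hv1, hv02] at hn
        norm_num at hn
  · have hsq2 : (Real.sqrt 2:ℝ)^2 = 2 := Real.sq_sqrt (by norm_num)
    have hsq3 : (Real.sqrt 3:ℝ)^2 = 3 := Real.sq_sqrt (by norm_num)
    have h0 := congrFun hv 0
    have h1 := congrFun hv 1
    have h2 := congrFun hv 2
    simp only [J1z, Matrix.mulVec, dotProduct, Fin.sum_univ_three] at h0 h1 h2
    norm_num [Matrix.vecHead, Matrix.vecTail, Matrix.cons_val_two, Matrix.tail_cons, Matrix.head_cons, Matrix.cons_val_one] at h0 h1 h2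
    simp only [Fin.sum_univ_three] at hn
    rw [Fin.sum_univ_three]
    by_cases ht1 : t = 1
    · subst ht1
      have hv1 : v 1 = 0 := h1.resolve_left (by norm_num)
      have hv2 : v 2 = 0 := by linear_combination (-(1:ℂ)/2) * h2
      rw [hv1, hv2] at hn
      simp only [norm_zero] at hn
      have hr : ‖v 0‖^2 = 1 := by nlinarith
      have key := key_norm (v 0) (-(Real.sqrt 2/(2*Real.sqrt 3))) (Real.sqrt 2/(2*Real.sqrt 3))
        1 hr (by rw [neg_sq, div_pow, hsq2, mul_pow, hsq3]; norm_num)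
      convert key using 3
      simp only [hv1, hv2, e1A, e2A, Matrix.cons_val_zero, Matrix.cons_val_one,
        Matrix.head_cons, Matrix.cons_val_two, Matrix.tail_cons, star_zero]
      push_cast
      ring
    · by_cases ht0 : t = 0
      · subst ht0
        have hv0 : v 0 = 0 := by linear_combination h0
        have hv2 : v 2 = 0 := by linear_combination -h2
        rw [hv0, hv2] at hn
        simp only [norm_zero] at hn
        have hr : ‖v 1‖^2 = 1 := by nlinarith
        have key := key_norm (v 1) ((Real.sqrt 3)⁻¹) 0 1 hr (by norm_num [hsq3])
        convert key using 3
        simp only [hv0, hv2, e1A, e2A, Matrix.cons_val_zero, Matrix.cons_val_one,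
          Matrix.head_cons, Matrix.cons_val_two, Matrix.tail_cons, star_zero]
        push_cast
        ring
      · by_cases htm : t = -1
        · subst htm
          have hv0 : v 0 = 0 := by linear_combination (1/2 : ℂ) * h0
          have hv1 : v 1 = 0 := h1.resolve_left (by norm_num)
          rw [hv0, hv1] at hn
          simp only [norm_zero] at hn
          have hr : ‖v 2‖^2 = 1 := by nlinarith
          have key := key_norm (v 2) (Real.sqrt 2/(2*Real.sqrt 3)) (Real.sqrt 2/(2*Real.sqrt 3))
            1 hr (by rw [div_pow, hsq2, mul_pow, hsq3]; norm_num)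
          convert key using 3
          simp only [hv0, hv1, e1A, e2A, Matrix.cons_val_zero, Matrix.cons_val_one,
            Matrix.head_cons, Matrix.cons_val_two, Matrix.tail_cons, star_zero]
          push_cast
          ring
        · have hv0 : v 0 = 0 := by
            have h : (t - 1) * v 0 = 0 := by linear_combination -h0
            rcases mul_eq_zero.mp h with h | h
            · exact absurd (by linear_combination h) ht1
            · exact h
          have hv1 : v 1 = 0 := h1.resolve_left ht0
          have hv2 : v 2 = 0 := by
            have h : (t + 1) * v 2 = 0 := by linear_combination -h2
            rcases mul_eq_zero.mp h with h | h
            · exact absurd (by linear_combination h) htm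
            · exact h
          rw [hv0, hv1, hv2] at hn
          norm_num at hn

end
end
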